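/- Riccati solution yields a Hurwitz closed loop: Let A be a real q×q matrix, B a real q×m matrix, Q a real symmetric positive definite q×q matrix, and R a real symmetric positive definite m×m matrix. If P is a real symmetric positive definite solution of the algebraic Riccati equation Aᵀ P + P A + Q − P B R⁻¹ Bᵀ P = 0, then the closed-loop matrix A − B R⁻¹ Bᵀ P is Hurwitz. -/

import Mathlib

open Matrix

/-- Symmetric part of a real square matrix: `(A + Aᵀ)/2`. -/
noncomputable def symPart {n : ℕ} (A : Matrix (Fin n) (Fin n) ℝ) : Matrix (Fin n) (Fin n) ℝ :=
  (1 / 2 : ℝ) • (A + Aᵀ)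

theorem symPart_isHermitian {n : ℕ} (A : Matrix (Fin n) (Fin n) ℝ) :
    (symPart A).IsHermitian := by
  ext i j
  simp [symPart, Matrix.IsHermitian, Matrix.conjTranspose_apply, mul_comm, add_comm]
  ring

/-- Logarithmic 2-norm of a real square matrix: the largest eigenvalue of its
symmetric part `(A + Aᵀ)/2`. -/
noncomputable def mu2 {n : ℕ} (A : Matrix (Fin n) (Fin n) ℝ) : ℝ :=
  ⨆ i, (symPart_isHermitian A).eigenvalues i

/-- Spectral norm of a real matrix: the operator norm induced by the Euclidean norm. -/
noncomputable def specNorm {m n : ℕ} (A : Matrix (Fin m) (Fin n) ℝ) : ℝ :=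
  ‖LinearMap.toContinuousLinearMap (Matrix.toEuclideanLin A)‖

/-- A real square matrix is Hurwitz if every complex eigenvalue (i.e. every element of the
complex spectrum of its complexification) has strictly negative real part. -/
def IsHurwitz {n : ℕ} (A : Matrix (Fin n) (Fin n) ℝ) : Prop :=
  ∀ μ ∈ spectrum ℂ (A.map (Complex.ofReal ·)), μ.re < 0


open Matrix

open scoped ComplexOrder in
lemma map_posDef {n : ℕ} {M : Matrix (Fin n) (Fin n) ℝ} (hM : M.PosDef) :
    (M.map (Complex.ofReal ·)).PosDef := by
  have hsymm : ∀ i j, M j i = M i j := fun i j => by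
    have := congrFun (congrFun hM.1 i) j
    simpa [conjTranspose_apply] using this
  have hherm : (M.map (Complex.ofReal ·)).IsHermitian := by
    ext i j
    simp only [conjTranspose_apply, Matrix.map_apply, Complex.star_def, Complex.conj_ofReal]
    exact congrArg _ (hsymm i j)
  refine PosDef.of_dotProduct_mulVec_pos hherm fun x hx => ?_
  set s : ℂ := star x ⬝ᵥ (M.map (Complex.ofReal ·)) *ᵥ x with hs
  have hstar : star s = s := by
    calc star s = star (star x ⬝ᵥ (M.map (Complex.ofReal ·)) *ᵥ x) := by rw [hs]
    _ = star ((M.map (Complex.ofReal ·)) *ᵥ x) ⬝ᵥ x := by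
        rw [← star_dotProduct_star, star_star]
    _ = (star x ᵥ* (M.map (Complex.ofReal ·))ᴴ) ⬝ᵥ x := by rw [star_mulVec]
    _ = star x ⬝ᵥ (M.map (Complex.ofReal ·)) *ᵥ x := by rw [hherm.eq, ← dotProduct_mulVec]
    _ = s := hs.symm
  have him : s.im = 0 := Complex.conj_eq_iff_im.mp hstar
  set a : Fin n → ℝ := fun i => (x i).re with ha
  set b : Fin n → ℝ := fun i => (x i).im with hb
  have hre : s.re = a ⬝ᵥ M *ᵥ a + b ⬝ᵥ M *ᵥ b := by
    simp only [hs, dotProduct, mulVec, Pi.star_apply, Matrix.map_apply]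
    rw [Complex.re_sum, ← Finset.sum_add_distrib]
    refine Finset.sum_congr rfl fun j _ => ?_
    rw [Finset.mul_sum, Complex.re_sum, Finset.mul_sum, Finset.mul_sum,
      ← Finset.sum_add_distrib]
    refine Finset.sum_congr rfl fun k _ => ?_
    simp only [Complex.mul_re, Complex.mul_im, Complex.ofReal_re, Complex.ofReal_im,
      Complex.star_def, Complex.conj_re, Complex.conj_im, ha, hb]
    ring
  have hab : a ≠ 0 ∨ b ≠ 0 := by
    by_contra h
    push_neg at h
    apply hx
    funext i
    have h1 := congrFun h.1 i
    have h2 := congrFun h.2 i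
    simp only [ha, hb, Pi.zero_apply] at h1 h2
    exact Complex.ext h1 h2
  have hpos : 0 < s.re := by
    rw [hre]
    rcases hab with h | h
    · exact add_pos_of_pos_of_nonneg (hM.dotProduct_mulVec_pos h) (hM.posSemidef.dotProduct_mulVec_nonneg b)
    · exact add_pos_of_nonneg_of_pos (hM.posSemidef.dotProduct_mulVec_nonneg a) (hM.dotProduct_mulVec_pos h)
  rw [Complex.lt_def]
  exact ⟨by simpa using hpos, by simp [him]⟩

open scoped ComplexOrder

/-- a symmetric positive definite solution `P` of the ARE
`AᵀP + PA + Q − PBR⁻¹BᵀP = 0` (with `Q ≻ 0`, `R ≻ 0`) yields a Hurwitz closed-loop matrix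
`A − BR⁻¹BᵀP`. -/
theorem riccati_closed_loop_hurwitz {q m : ℕ}
    (A : Matrix (Fin q) (Fin q) ℝ) (B : Matrix (Fin q) (Fin m) ℝ)
    (Q P : Matrix (Fin q) (Fin q) ℝ) (R : Matrix (Fin m) (Fin m) ℝ)
    (hQ : Q.PosDef) (hR : R.PosDef)
    (hP : P.PosDef)
    (hARE : Aᵀ * P + P * A + Q - P * B * R⁻¹ * Bᵀ * P = 0) :
    IsHurwitz (A - B * (R⁻¹ * Bᵀ * P)) := by
  classical
  set K : Matrix (Fin q) (Fin q) ℝ := B * (R⁻¹ * Bᵀ * P) with hK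
  set S : Matrix (Fin q) (Fin q) ℝ := P * B * R⁻¹ * Bᵀ * P with hSdef
  have hPt : Pᵀ = P := hP.1
  have hRt : Rᵀ = R := hR.1
  have hRit : (R⁻¹)ᵀ = R⁻¹ := by rw [transpose_nonsing_inv, hRt]
  -- S is positive semidefinite
  have hS : S.PosSemidef := by
    have h := hR.inv.posSemidef.conjTranspose_mul_mul_same (Bᵀ * P)
    have heq : (Bᵀ * P)ᴴ * R⁻¹ * (Bᵀ * P) = S := by
      rw [conjTranspose_eq_transpose_of_trivial, transpose_mul, hPt, transpose_transpose,
        hSdef]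
      simp only [Matrix.mul_assoc]
    rwa [heq] at h
  have hN : (Q + S).PosDef := hQ.add_posSemidef hS
  -- Lyapunov identity
  have h1 : Aᵀ * P + P * A = S - Q := by
    have h0 : Aᵀ * P + P * A + Q = S := by rwa [sub_eq_zero] at hARE
    rw [← h0]; abel
  have hKtP : Kᵀ * P = S := by
    rw [hK, transpose_mul, transpose_mul, transpose_mul, hPt, hRit, transpose_transpose, hSdef]
    simp only [Matrix.mul_assoc]
  have hPK : P * K = S := by
    rw [hK, hSdef]
    simp only [Matrix.mul_assoc]
  have key : (A - K)ᵀ * P + P * (A - K) = -(Q + S) := by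
    rw [transpose_sub, Matrix.sub_mul, Matrix.mul_sub, hKtP, hPK]
    have h2 : Aᵀ * P - S + (P * A - S) = (Aᵀ * P + P * A) - S - S := by abel
    rw [h2, h1]; abel
  -- eigenvector extraction
  unfold IsHurwitz
  intro μ hμ
  set Ac : Matrix (Fin q) (Fin q) ℂ := (A - K).map (Complex.ofReal ·) with hAc
  rw [← AlgEquiv.spectrum_eq (Matrix.toLinAlgEquiv' : Matrix (Fin q) (Fin q) ℂ ≃ₐ[ℂ] _) Ac]
    at hμ
  have hev : Module.End.HasEigenvalue (Matrix.toLinAlgEquiv' Ac) μ :=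
    Module.End.hasEigenvalue_iff_mem_spectrum.mpr hμ
  obtain ⟨v, hv⟩ := hev.exists_hasEigenvector
  have hvne : v ≠ 0 := hv.2
  have hmul : Ac *ᵥ v = μ • v := by
    have := Module.End.mem_eigenspace_iff.mp hv.1
    rwa [Matrix.toLinAlgEquiv'_apply] at this
  -- complexifications
  have hmapmul : ∀ (X Y : Matrix (Fin q) (Fin q) ℝ),
      (X * Y).map (Complex.ofReal ·) = X.map (Complex.ofReal ·) * Y.map (Complex.ofReal ·) := by
    intro X Y; ext i j; simp [Matrix.mul_apply, Matrix.map_apply]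
  set Pc : Matrix (Fin q) (Fin q) ℂ := P.map (Complex.ofReal ·) with hPc
  set Nc : Matrix (Fin q) (Fin q) ℂ := (Q + S).map (Complex.ofReal ·) with hNc
  set p : ℂ := star v ⬝ᵥ Pc *ᵥ v with hp
  have hppos : 0 < p := (map_posDef hP).dotProduct_mulVec_pos hvne
  have hNpos : 0 < star v ⬝ᵥ Nc *ᵥ v := (map_posDef hN).dotProduct_mulVec_pos hvne
  -- star of eigen equation
  have hAcstar : Ac *ᵥ (star v) = star (Ac *ᵥ v) := by
    funext i
    simp only [Pi.star_apply, mulVec, dotProduct, Complex.star_def, map_sum]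
    refine Finset.sum_congr rfl fun j _ => ?_
    simp only [hAc, Matrix.map_apply]
    rw [_root_.map_mul, Complex.conj_ofReal]
  -- main scalar identity
  have hterm1 : star v ⬝ᵥ ((A - K)ᵀ * P).map (Complex.ofReal ·) *ᵥ v = star μ * p := by
    rw [hmapmul, transpose_map, ← hAc, ← hPc, ← mulVec_mulVec, dotProduct_mulVec,
      vecMul_transpose, hAcstar, hmul, star_smul, smul_dotProduct, smul_eq_mul, hp]
  have hterm2 : star v ⬝ᵥ (P * (A - K)).map (Complex.ofReal ·) *ᵥ v = μ * p := by
    rw [hmapmul, ← hAc, ← hPc, ← mulVec_mulVec, hmul, mulVec_smul, dotProduct_smul,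
      smul_eq_mul, hp]
  have hkey2 : (star μ + μ) * p = -(star v ⬝ᵥ Nc *ᵥ v) := by
    have hmapadd : ((A - K)ᵀ * P + P * (A - K)).map (Complex.ofReal ·)
        = ((A - K)ᵀ * P).map (Complex.ofReal ·) + (P * (A - K)).map (Complex.ofReal ·) := by
      ext i j; simp [Matrix.map_apply]
    have hmapneg : ((-(Q + S)).map (Complex.ofReal ·) : Matrix (Fin q) (Fin q) ℂ) = -Nc := by
      ext i j; simp [Matrix.map_apply, hNc]
    have hcalc : star v ⬝ᵥ (((A - K)ᵀ * P + P * (A - K)).map (Complex.ofReal ·)) *ᵥ v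
        = (star μ + μ) * p := by
      rw [hmapadd, add_mulVec, dotProduct_add, hterm1, hterm2, add_mul]
    rw [← hcalc, key, hmapneg, neg_mulVec, dotProduct_neg]
  -- conclude
  have hμre : star μ + μ = ((2 * μ.re : ℝ) : ℂ) := by
    rw [Complex.star_def, add_comm, Complex.add_conj]
  have hre : 2 * μ.re * p.re = -((star v ⬝ᵥ Nc *ᵥ v).re) := by
    have h3 := congrArg Complex.re hkey2
    rwa [hμre, Complex.re_ofReal_mul, Complex.neg_re] at h3
  have hppos' : 0 < p.re := (Complex.lt_def.mp hppos).1
  have hNpos' : 0 < (star v ⬝ᵥ Nc *ᵥ v).re := (Complex.lt_def.mp hNpos).1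
  nlinarith [hre, hppos', hNpos']
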